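/- (Hilbert–Schmidt measure in region I.) For all real α, β with α ≥ 1/4 + β/8, every separable density matrix σ on ℂ³ ⊗ ℂ³ satisfies ‖σ − ρ_{α,β,0}‖ ≥ (2√2/3)·(α − 1/4 − β/8); in particular, if α > 1/4 + β/8 then ρ_{α,β,0} is not separable. -/

import Mathlib

open Matrix Complex
open scoped Matrix Kronecker ComplexOrder

noncomputable section

/-- A density matrix: Hermitian, positive semidefinite, trace 1. -/
def IsDensityMatrix {n : Type*} [Fintype n] [DecidableEq n] (ρ : Matrix n n ℂ) : Prop :=
  ρ.IsHermitian ∧ ρ.PosSemidef ∧ ρ.trace = 1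

/-- A separable state on ℂ^d ⊗ ℂ^d : a finite convex combination of Kronecker
products of density matrices. -/
def IsSepState {d : ℕ} (ρ : Matrix (Fin d × Fin d) (Fin d × Fin d) ℂ) : Prop :=
  ∃ (K : ℕ) (p : Fin K → ℝ) (ρ₁ ρ₂ : Fin K → Matrix (Fin d) (Fin d) ℂ),
    (∀ k, 0 ≤ p k) ∧ (∑ k, p k = 1) ∧
    (∀ k, IsDensityMatrix (ρ₁ k)) ∧ (∀ k, IsDensityMatrix (ρ₂ k)) ∧
    ρ = ∑ k, (p k : ℂ) • (ρ₁ k ⊗ₖ ρ₂ k)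

/-- Hilbert–Schmidt inner product ⟨A,B⟩ = Tr(A†B). -/
def hsInner {n : Type*} [Fintype n] (A B : Matrix n n ℂ) : ℂ := (Aᴴ * B).trace

/-- Hilbert–Schmidt (Frobenius) norm ‖A‖ = √Tr(A†A). -/
def hsNorm {n : Type*} [Fintype n] (A : Matrix n n ℂ) : ℝ :=
  Real.sqrt ((Aᴴ * A).trace.re)

/-- The Weyl operator U_{nm} on ℂ^d: (U_{nm})_{k,l} = exp(2πi k n / d) if l = (k+m) mod d. -/
def weyl (d : ℕ) (n m : Fin d) : Matrix (Fin d) (Fin d) ℂ :=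
  Matrix.of fun k l =>
    if l = k + m then Complex.exp (2 * Real.pi * Complex.I * k.val * n.val / d) else 0

/-- The maximally entangled two-qutrit vector |φ⁺₃⟩. -/
def phiPlus3 : (Fin 3 × Fin 3) → ℂ :=
  fun p => if p.1 = p.2 then ((1 / Real.sqrt 3 : ℝ) : ℂ) else 0

/-- The projector |φ⁺₃⟩⟨φ⁺₃|. -/
def projPhiPlus3 : Matrix (Fin 3 × Fin 3) (Fin 3 × Fin 3) ℂ :=
  vecMulVec phiPlus3 (star phiPlus3)

/-- The two-qutrit Bell projectors P_{nm}. -/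
def bellP (n m : Fin 3) : Matrix (Fin 3 × Fin 3) (Fin 3 × Fin 3) ℂ :=
  (weyl 3 n m ⊗ₖ (1 : Matrix (Fin 3) (Fin 3) ℂ)) * projPhiPlus3 *
    (weyl 3 n m ⊗ₖ (1 : Matrix (Fin 3) (Fin 3) ℂ))ᴴ

/-- The three-parameter family of two-qutrit states ρ_{α,β,γ}. -/
def rhoFam (α β γ : ℝ) : Matrix (Fin 3 × Fin 3) (Fin 3 × Fin 3) ℂ :=
  (((1 - α - β - γ) / 9 : ℝ) : ℂ) • (1 : Matrix (Fin 3 × Fin 3) (Fin 3 × Fin 3) ℂ) +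
    (α : ℂ) • bellP 0 0 + ((β / 2 : ℝ) : ℂ) • (bellP 1 0 + bellP 2 0) +
    ((γ / 3 : ℝ) : ℂ) • (bellP 0 1 + bellP 1 1 + bellP 2 1)

/-- The operator U₁. -/
def opU1 : Matrix (Fin 3 × Fin 3) (Fin 3 × Fin 3) ℂ :=
  weyl 3 0 1 ⊗ₖ weyl 3 0 1 + weyl 3 0 2 ⊗ₖ weyl 3 0 2 + weyl 3 1 1 ⊗ₖ weyl 3 2 1 +
    weyl 3 1 2 ⊗ₖ weyl 3 2 2 + weyl 3 2 1 ⊗ₖ weyl 3 1 1 + weyl 3 2 2 ⊗ₖ weyl 3 1 2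

/-- The operator U₂ᴵ. -/
def opU2I : Matrix (Fin 3 × Fin 3) (Fin 3 × Fin 3) ℂ := weyl 3 1 0 ⊗ₖ weyl 3 2 0

/-- The operator U₂ᴵᴵ. -/
def opU2II : Matrix (Fin 3 × Fin 3) (Fin 3 × Fin 3) ℂ := weyl 3 2 0 ⊗ₖ weyl 3 1 0

/-- The operator U₂ = U₂ᴵ + U₂ᴵᴵ. -/
def opU2 : Matrix (Fin 3 × Fin 3) (Fin 3 × Fin 3) ℂ := opU2I + opU2II

/-- σ₊ = (1/3)(|01⟩⟨01| + |12⟩⟨12| + |20⟩⟨20|). -/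
def sigmaPlus : Matrix (Fin 3 × Fin 3) (Fin 3 × Fin 3) ℂ :=
  (1 / 3 : ℂ) • Matrix.diagonal (fun p => if p.2 = p.1 + 1 then 1 else 0)

/-- σ₋ = (1/3)(|10⟩⟨10| + |21⟩⟨21| + |02⟩⟨02|). -/
def sigmaMinus : Matrix (Fin 3 × Fin 3) (Fin 3 × Fin 3) ℂ :=
  (1 / 3 : ℂ) • Matrix.diagonal (fun p => if p.1 = p.2 + 1 then 1 else 0)

/-- The Horodecki states ρ_b. -/
def horodecki (b : ℝ) : Matrix (Fin 3 × Fin 3) (Fin 3 × Fin 3) ℂ :=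
  (2 / 7 : ℂ) • projPhiPlus3 + ((b / 7 : ℝ) : ℂ) • sigmaPlus +
    (((5 - b) / 7 : ℝ) : ℂ) • sigmaMinus

/-- Partial transpose in the second subsystem. -/
def ptB (ρ : Matrix (Fin 3 × Fin 3) (Fin 3 × Fin 3) ℂ) :
    Matrix (Fin 3 × Fin 3) (Fin 3 × Fin 3) ℂ :=
  Matrix.of fun p q => ρ (p.1, q.2) (q.1, p.2)


namespace Stmt11Aux

open scoped ComplexConjugate

/-! ### The primitive cube root of unity -/

def ω : ℂ := ⟨-(1/2), Real.sqrt 3 / 2⟩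

lemma sqrt3_sq : Real.sqrt 3 * Real.sqrt 3 = 3 := Real.mul_self_sqrt (by norm_num)

lemma exp_eq_ω : Complex.exp (2 * Real.pi * Complex.I / 3) = ω := by
  have h : (2 * (Real.pi:ℂ) * Complex.I / 3) = ((2 * Real.pi / 3 : ℝ) : ℂ) * Complex.I := by
    push_cast; ring
  rw [h, Complex.exp_mul_I, ← Complex.ofReal_cos, ← Complex.ofReal_sin]
  have h1 : (2 * Real.pi / 3 : ℝ) = Real.pi - Real.pi/3 := by ring
  rw [h1, Real.cos_pi_sub, Real.sin_pi_sub, Real.cos_pi_div_three, Real.sin_pi_div_three]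
  apply Complex.ext <;> simp [ω]

lemma weyl3_apply (n m k l : Fin 3) :
    weyl 3 n m k l = if l = k + m then ω ^ (k.val * n.val) else 0 := by
  unfold weyl
  simp only [Matrix.of_apply]
  congr 1
  have h : (2 * (Real.pi:ℂ) * Complex.I * (k.val:ℂ) * (n.val:ℂ) / ((3:ℕ):ℂ))
      = ((k.val * n.val : ℕ) : ℂ) * (2 * Real.pi * Complex.I / 3) := by push_cast; ring
  rw [h, Complex.exp_nat_mul, exp_eq_ω]

lemma ω_quad : ω^2 + ω + 1 = 0 := by
  have := sqrt3_sq
  apply Complex.ext <;>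
    simp [ω, pow_two, Complex.add_re, Complex.mul_re, Complex.mul_im] <;> nlinarith

lemma ω_cube : ω^3 = 1 := by linear_combination (ω - 1) * ω_quad

lemma conj_ω : conj ω = ω^2 := by
  apply Complex.ext <;>
    simp [ω, pow_two, Complex.mul_re, Complex.mul_im] <;> nlinarith [sqrt3_sq]

lemma normSq_ω : Complex.normSq ω = 1 := by
  simp [Complex.normSq_apply, ω]; nlinarith [sqrt3_sq]

lemma normSq_ω_pow (a : ℕ) : Complex.normSq (ω ^ a) = 1 := by
  rw [map_pow, normSq_ω, one_pow]

lemma ω_pow4 : ω^4 = ω := by linear_combination ω * ω_cube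
lemma ω_pow5 : ω^5 = ω^2 := by linear_combination ω^2 * ω_cube
lemma ω_pow6 : ω^6 = 1 := by linear_combination (ω^3 + 1) * ω_cube
lemma ω_pow8 : ω^8 = ω^2 := by linear_combination (ω^5 + ω^2) * ω_cube
lemma ω_pow10 : ω^10 = ω := by linear_combination (ω^7 + ω^4 + ω) * ω_cube
lemma ω_pow12 : ω^12 = 1 := by linear_combination (ω^9 + ω^6 + ω^3 + 1) * ω_cube
lemma conj3 : conj (3:ℂ) = 3 := by apply Complex.ext <;> simp

/-! ### Entries of the Bell projectors -/

lemma bellP_apply (n m : Fin 3) (p q : Fin 3 × Fin 3) :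
    bellP n m p q = (1/3 : ℂ) * (weyl 3 n m p.1 p.2 * conj (weyl 3 n m q.1 q.2)) := by
  rcases p with ⟨p1, p2⟩; rcases q with ⟨q1, q2⟩
  have hc : ((Real.sqrt 3:ℝ):ℂ)⁻¹ * ((Real.sqrt 3:ℝ):ℂ)⁻¹ = 3⁻¹ := by
    rw [← mul_inv, ← Complex.ofReal_mul, Real.mul_self_sqrt] <;> norm_num
  simp only [bellP, projPhiPlus3, phiPlus3, Matrix.mul_apply, Matrix.conjTranspose_apply,
    Matrix.kroneckerMap_apply, Matrix.vecMulVec_apply, Matrix.one_apply, Pi.star_apply,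
    Fintype.sum_prod_type, RCLike.star_def]
  simp only [mul_ite, ite_mul, zero_mul, mul_zero, apply_ite conj, map_zero, Finset.sum_ite_eq,
    Finset.sum_ite_eq', Finset.mem_univ, if_true, Complex.conj_ofReal, _root_.map_mul]
  fin_cases p2 <;> fin_cases q2 <;>
    simp [Fin.sum_univ_three, one_div, Complex.ofReal_inv] <;> rw [hc] <;> ring

/-! ### Generic facts about the Hilbert–Schmidt inner product and norm -/

lemma hsInner_eq_sum' {n : Type*} [Fintype n] (A B : Matrix n n ℂ) :
    hsInner A B = ∑ x : n × n, conj (A x.1 x.2) * B x.1 x.2 := by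
  rw [hsInner]
  simp only [Matrix.trace, Matrix.diag, Matrix.mul_apply, Matrix.conjTranspose_apply]
  rw [Finset.sum_comm, Fintype.sum_prod_type]
  simp [Complex.star_def]

lemma hsNorm_eq_sum {n : Type*} [Fintype n] (A : Matrix n n ℂ) :
    hsNorm A = Real.sqrt (∑ x : n × n, Complex.normSq (A x.1 x.2)) := by
  rw [hsNorm]
  congr 1
  have : (Aᴴ * A).trace = hsInner A A := rfl
  rw [this, hsInner_eq_sum']
  rw [Complex.re_sum]
  congr 1; ext x
  rw [mul_comm, Complex.mul_conj]
  simp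

lemma hsNorm_nonneg' {n : Type*} [Fintype n] (A : Matrix n n ℂ) : 0 ≤ hsNorm A :=
  Real.sqrt_nonneg _

lemma re_hsInner_le {n : Type*} [Fintype n] (A B : Matrix n n ℂ) :
    (hsInner A B).re ≤ hsNorm A * hsNorm B := by
  rw [hsInner_eq_sum', hsNorm_eq_sum, hsNorm_eq_sum, Complex.re_sum]
  calc ∑ x : n × n, (conj (A x.1 x.2) * B x.1 x.2).re
      ≤ ∑ x : n × n, Real.sqrt (Complex.normSq (A x.1 x.2)) *
          Real.sqrt (Complex.normSq (B x.1 x.2)) := by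
        apply Finset.sum_le_sum
        intro x _
        have h1 : (conj (A x.1 x.2) * B x.1 x.2).re ≤ ‖conj (A x.1 x.2) * B x.1 x.2‖ :=
          Complex.re_le_norm _
        have h2 : ‖conj (A x.1 x.2) * B x.1 x.2‖
            = Real.sqrt (Complex.normSq (A x.1 x.2)) * Real.sqrt (Complex.normSq (B x.1 x.2)) := by
          rw [norm_mul, Complex.norm_def, Complex.norm_def, Complex.normSq_conj]
        linarith
    _ ≤ Real.sqrt (∑ x : n × n, Complex.normSq (A x.1 x.2)) *
          Real.sqrt (∑ x : n × n, Complex.normSq (B x.1 x.2)) :=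
        Real.sum_sqrt_mul_sqrt_le _ (fun _ => Complex.normSq_nonneg _)
          (fun _ => Complex.normSq_nonneg _)

lemma re_sum_mul_le {n : Type*} [Fintype n] (A B : Matrix n n ℂ) :
    (∑ x : n × n, A x.1 x.2 * B x.1 x.2).re ≤
      Real.sqrt (∑ x : n × n, Complex.normSq (A x.1 x.2)) *
        Real.sqrt (∑ x : n × n, Complex.normSq (B x.1 x.2)) := by
  rw [Complex.re_sum]
  calc ∑ x : n × n, (A x.1 x.2 * B x.1 x.2).re
      ≤ ∑ x : n × n, Real.sqrt (Complex.normSq (A x.1 x.2)) *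
          Real.sqrt (Complex.normSq (B x.1 x.2)) := by
        apply Finset.sum_le_sum
        intro x _
        have h1 : (A x.1 x.2 * B x.1 x.2).re ≤ ‖A x.1 x.2 * B x.1 x.2‖ :=
          Complex.re_le_norm _
        have h2 : ‖A x.1 x.2 * B x.1 x.2‖
            = Real.sqrt (Complex.normSq (A x.1 x.2)) * Real.sqrt (Complex.normSq (B x.1 x.2)) := by
          rw [norm_mul, Complex.norm_def, Complex.norm_def]
        linarith
    _ ≤ _ := Real.sum_sqrt_mul_sqrt_le _ (fun _ => Complex.normSq_nonneg _)
          (fun _ => Complex.normSq_nonneg _)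

lemma hsNorm_sub_comm {n : Type*} [Fintype n] (A B : Matrix n n ℂ) :
    hsNorm (A - B) = hsNorm (B - A) := by
  rw [hsNorm, hsNorm]
  congr 3
  rw [show A - B = -(B - A) from (neg_sub B A).symm, Matrix.conjTranspose_neg, neg_mul_neg]

lemma hsNorm_zero {n : Type*} [Fintype n] : hsNorm (0 : Matrix n n ℂ) = 0 := by
  simp [hsNorm]

/-! ### Linearity of `hsInner` -/

lemma hsInner_add_right {n : Type*} [Fintype n] (A B C : Matrix n n ℂ) :
    hsInner A (B + C) = hsInner A B + hsInner A C := by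
  simp [hsInner, Matrix.mul_add]

lemma hsInner_sub_right {n : Type*} [Fintype n] (A B C : Matrix n n ℂ) :
    hsInner A (B - C) = hsInner A B - hsInner A C := by
  simp [hsInner, Matrix.mul_sub]

lemma hsInner_smul_right {n : Type*} [Fintype n] (A B : Matrix n n ℂ) (c : ℂ) :
    hsInner A (c • B) = c * hsInner A B := by
  simp [hsInner, Matrix.mul_smul, Matrix.trace_smul, smul_eq_mul]

lemma hsInner_sum_right {n : Type*} [Fintype n] {K : ℕ} (A : Matrix n n ℂ)
    (f : Fin K → Matrix n n ℂ) :
    hsInner A (∑ k, f k) = ∑ k, hsInner A (f k) := by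
  simp [hsInner, Matrix.mul_sum]

lemma hsInner_sub_left {n : Type*} [Fintype n] (A B C : Matrix n n ℂ) :
    hsInner (A - B) C = hsInner A C - hsInner B C := by
  simp [hsInner, Matrix.conjTranspose_sub, Matrix.sub_mul]

lemma hsInner_smul_left {n : Type*} [Fintype n] (A B : Matrix n n ℂ) (c : ℂ) :
    hsInner (c • A) B = conj c * hsInner A B := by
  simp [hsInner, Matrix.conjTranspose_smul, Matrix.smul_mul, Matrix.trace_smul, smul_eq_mul,
    Complex.star_def]

lemma hsInner_one_left {n : Type*} [Fintype n] [DecidableEq n] (B : Matrix n n ℂ) :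
    hsInner 1 B = B.trace := by
  simp [hsInner]

lemma hsInner_one_right {n : Type*} [Fintype n] [DecidableEq n] (A : Matrix n n ℂ) :
    hsInner A 1 = conj (A.trace) := by
  simp [hsInner, Matrix.trace_conjTranspose, Complex.star_def]

/-! ### Density matrices -/

lemma psd_diag_nonneg {n : Type*} [Fintype n] [DecidableEq n] {M : Matrix n n ℂ}
    (hM : M.PosSemidef) (i : n) : 0 ≤ (M i i).re := by
  have h := hM.re_dotProduct_nonneg (Pi.single i 1)
  simpa [dotProduct, Matrix.mulVec_single, Pi.single_apply, apply_ite,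
    Finset.sum_ite_eq', Finset.sum_ite_eq] using h

lemma psd_entry {n : Type*} [Fintype n] [DecidableEq n] {M : Matrix n n ℂ}
    (hM : M.PosSemidef) (i j : n) :
    Complex.normSq (M i j) ≤ (M i i).re * (M j j).re := by
  have hherm := hM.1
  by_cases hij : i = j
  · subst hij
    have h2 : conj (M i i) = M i i := by
      have := hherm.apply i i
      simpa [Matrix.conjTranspose_apply] using this
    have him : (M i i).im = 0 := by
      have := congrArg Complex.im h2
      simp at this
      linarith
    rw [Complex.normSq_apply, him]
    nlinarith [psd_diag_nonneg hM i]
  · set z := M i j with hz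
    have hji : M j i = conj z := by
      have := hherm.apply j i
      simp only [Matrix.conjTranspose_apply, Complex.star_def] at this
      rw [← this]
    set s := Complex.normSq z with hs
    have hs0 : 0 ≤ s := Complex.normSq_nonneg z
    set a := (M i i).re with hA
    set c := (M j j).re with hC
    have ha := psd_diag_nonneg hM i
    have hc := psd_diag_nonneg hM j
    have hzz : z * conj z = (s:ℂ) := Complex.mul_conj z
    have key : ∀ t : ℝ, 0 ≤ (s * a) * (t * t) + (2 * s) * t + c := by
      intro t
      have h := hM.re_dotProduct_nonneg ((t * z) • (Pi.single i 1 : n → ℂ) + (Pi.single j 1 : n → ℂ))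
      have e1 : (star (((t:ℂ) * z) • (Pi.single i 1 : n → ℂ) + (Pi.single j 1 : n → ℂ))) ⬝ᵥ
          (M *ᵥ (((t:ℂ) * z) • (Pi.single i 1 : n → ℂ) + (Pi.single j 1 : n → ℂ)))
          = conj ((t:ℂ)*z) * ((t:ℂ)*z) * M i i + conj ((t:ℂ)*z) * M i j
            + ((t:ℂ)*z) * M j i + M j j := by
        rw [Matrix.mulVec_add, Matrix.mulVec_smul, Matrix.mulVec_single, Matrix.mulVec_single,
          star_add, star_smul, ← Pi.single_star, ← Pi.single_star, star_one,
          add_dotProduct, smul_dotProduct, single_dotProduct,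
          single_dotProduct]
        simp only [Pi.add_apply, Pi.smul_apply, mul_one, smul_eq_mul, Complex.star_def,
          op_smul_eq_mul, Matrix.col_apply]
        ring
      rw [e1] at h
      have e2 : conj ((t:ℂ)*z) * ((t:ℂ)*z) * M i i + conj ((t:ℂ)*z) * M i j
            + ((t:ℂ)*z) * M j i + M j j
          = ((t*t*s : ℝ):ℂ) * M i i + ((2*t*s : ℝ):ℂ) + M j j := by
        rw [hji, ← hz]
        simp only [_root_.map_mul, Complex.conj_ofReal]
        push_cast
        linear_combination ((t:ℂ)*(t:ℂ)*M i i + 2*(t:ℂ)) * hzz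
      rw [e2] at h
      have e3 : (((t*t*s : ℝ):ℂ) * M i i + ((2*t*s : ℝ):ℂ) + M j j).re
          = (s * a) * (t * t) + (2 * s) * t + c := by
        simp [Complex.add_re, Complex.re_ofReal_mul, hA, hC]
        ring
      rw [← e3]
      exact h
    have hd := discrim_le_zero key
    rw [discrim] at hd
    rcases eq_or_lt_of_le hs0 with hs1 | hs1
    · rw [← hs1]; exact mul_nonneg ha hc
    · nlinarith [hd]

lemma density_sum_normSq_le {n : Type*} [Fintype n] [DecidableEq n]
    {A : Matrix n n ℂ} (hA : IsDensityMatrix A) :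
    ∑ x : n × n, Complex.normSq (A x.1 x.2) ≤ 1 := by
  obtain ⟨-, hpsd, htr⟩ := hA
  have htr' : ∑ i, (A i i).re = 1 := by
    have : (A.trace).re = 1 := by rw [htr]; simp
    rw [← this, Matrix.trace]
    simp [Complex.re_sum, Matrix.diag]
  calc ∑ x : n × n, Complex.normSq (A x.1 x.2)
      ≤ ∑ x : n × n, (A x.1 x.1).re * (A x.2 x.2).re :=
        Finset.sum_le_sum fun x _ => psd_entry hpsd x.1 x.2
    _ = (∑ i, (A i i).re) * (∑ j, (A j j).re) := by
        rw [Fintype.sum_prod_type, Finset.sum_mul_sum]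
    _ = 1 := by rw [htr']; norm_num

/-! ### Concrete scalar computations -/

lemma trace_b00 : (bellP 0 0).trace = 1 := by
  simp only [Matrix.trace, Matrix.diag, Fintype.sum_prod_type, bellP_apply, weyl3_apply]
  simp [Fin.sum_univ_three, Fin.ext_iff]
  norm_num

lemma trace_b10 : (bellP 1 0).trace = 1 := by
  simp only [Matrix.trace, Matrix.diag, Fintype.sum_prod_type, bellP_apply, weyl3_apply]
  simp [Fin.sum_univ_three, Fin.ext_iff, Complex.mul_conj, normSq_ω_pow, conj_ω,
    ω_pow4, ω_pow5, ω_pow6, ω_pow8, ω_pow10, ω_pow12]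
  linear_combination ((ω^3+2)/3) * ω_cube

lemma trace_b20 : (bellP 2 0).trace = 1 := by
  simp only [Matrix.trace, Matrix.diag, Fintype.sum_prod_type, bellP_apply, weyl3_apply]
  simp [Fin.sum_univ_three, Fin.ext_iff, Complex.mul_conj, normSq_ω_pow, conj_ω,
    ω_pow4, ω_pow5, ω_pow6, ω_pow8, ω_pow10, ω_pow12]
  linear_combination ((ω^3+2)/3) * ω_cube

lemma inner_b00_b00 : hsInner (bellP 0 0) (bellP 0 0) = 1 := by
  rw [hsInner_eq_sum']
  simp only [Fintype.sum_prod_type, bellP_apply, weyl3_apply]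
  simp [Fin.sum_univ_three, Fin.ext_iff, conj3, map_ofNat]
  norm_num

lemma inner_b00_b10 : hsInner (bellP 0 0) (bellP 1 0) = 0 := by
  rw [hsInner_eq_sum']
  simp only [Fintype.sum_prod_type, bellP_apply, weyl3_apply]
  simp [Fin.sum_univ_three, Fin.ext_iff, map_pow, conj_ω, conj3, map_ofNat,
    ω_pow4, ω_pow5, ω_pow6, ω_pow8, ω_pow10, ω_pow12]
  linear_combination ((1 + ω^2 + ω^4)/9) * ω_quad

lemma inner_b00_b20 : hsInner (bellP 0 0) (bellP 2 0) = 0 := by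
  rw [hsInner_eq_sum']
  simp only [Fintype.sum_prod_type, bellP_apply, weyl3_apply]
  simp [Fin.sum_univ_three, Fin.ext_iff, map_pow, conj_ω, conj3, map_ofNat,
    ω_pow4, ω_pow5, ω_pow6, ω_pow8, ω_pow10, ω_pow12]
  linear_combination ((1 + ω^2 + ω^4)/9) * ω_quad

lemma inner_b00_kron (A B : Matrix (Fin 3) (Fin 3) ℂ) :
    hsInner (bellP 0 0) (A ⊗ₖ B)
      = ((1/3 : ℝ) : ℂ) * ∑ x : Fin 3 × Fin 3, A x.1 x.2 * B x.1 x.2 := by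
  rw [hsInner_eq_sum']
  simp only [Fintype.sum_prod_type, bellP_apply, weyl3_apply, Matrix.kroneckerMap_apply]
  push_cast
  simp [Fin.sum_univ_three, Fin.ext_iff, conj3, map_ofNat]
  ring

/-! ### The witness matrix -/

def Cmat : Matrix (Fin 3 × Fin 3) (Fin 3 × Fin 3) ℂ := bellP 0 0 - ((1/9 : ℝ) : ℂ) • 1

lemma trace_one9 : (1 : Matrix (Fin 3 × Fin 3) (Fin 3 × Fin 3) ℂ).trace = 9 := by
  simp [Matrix.trace_one]

lemma hsInner_C (X : Matrix (Fin 3 × Fin 3) (Fin 3 × Fin 3) ℂ) :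
    hsInner Cmat X = hsInner (bellP 0 0) X - ((1/9 : ℝ) : ℂ) * X.trace := by
  rw [Cmat, hsInner_sub_left, hsInner_smul_left, hsInner_one_left, Complex.conj_ofReal]

lemma iC1 : hsInner Cmat 1 = 0 := by
  rw [hsInner_C, hsInner_one_right, trace_b00, trace_one9]
  norm_num

lemma iCb00 : hsInner Cmat (bellP 0 0) = ((8/9 : ℝ) : ℂ) := by
  rw [hsInner_C, inner_b00_b00, trace_b00]
  push_cast; ring

lemma iCb10 : hsInner Cmat (bellP 1 0) = ((-(1/9) : ℝ) : ℂ) := by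
  rw [hsInner_C, inner_b00_b10, trace_b10]
  push_cast; ring

lemma iCb20 : hsInner Cmat (bellP 2 0) = ((-(1/9) : ℝ) : ℂ) := by
  rw [hsInner_C, inner_b00_b20, trace_b20]
  push_cast; ring

lemma trace_C : Cmat.trace = 0 := by
  rw [Cmat, Matrix.trace_sub, Matrix.trace_smul, trace_b00, trace_one9, smul_eq_mul]
  push_cast; norm_num

lemma inner_C_C : hsInner Cmat Cmat = ((8/9 : ℝ) : ℂ) := by
  rw [hsInner_C, trace_C, mul_zero, sub_zero, Cmat, hsInner_sub_right, hsInner_smul_right,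
    hsInner_one_right, inner_b00_b00, trace_b00, _root_.map_one]
  push_cast; norm_num

lemma hsNorm_C : hsNorm Cmat = 2 * Real.sqrt 2 / 3 := by
  rw [hsNorm]
  have h1 : (Cmatᴴ * Cmat).trace = hsInner Cmat Cmat := rfl
  rw [h1, inner_C_C, Complex.ofReal_re]
  rw [show (8/9 : ℝ) = (2 * Real.sqrt 2 / 3)^2 from by
    nlinarith [Real.sq_sqrt (show (0:ℝ) ≤ 2 by norm_num), Real.sqrt_nonneg 2]]
  exact Real.sqrt_sq (by positivity)

lemma inner_C_rho (α β : ℝ) :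
    hsInner Cmat (rhoFam α β 0) = ((8*α/9 - β/9 : ℝ) : ℂ) := by
  rw [rhoFam]
  simp only [zero_div, Complex.ofReal_zero, zero_smul, add_zero]
  rw [hsInner_add_right, hsInner_add_right, hsInner_smul_right, hsInner_smul_right,
    hsInner_smul_right, hsInner_add_right, iC1, iCb00, iCb10, iCb20]
  push_cast; ring

/-! ### The separability bound -/

lemma prod_bound {A B : Matrix (Fin 3) (Fin 3) ℂ}
    (hA : IsDensityMatrix A) (hB : IsDensityMatrix B) :
    (hsInner Cmat (A ⊗ₖ B)).re ≤ 2/9 := by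
  rw [hsInner_C, inner_b00_kron, Matrix.trace_kronecker, hA.2.2, hB.2.2, mul_one, mul_one]
  rw [Complex.sub_re, Complex.re_ofReal_mul, Complex.ofReal_re]
  have hS : (∑ x : Fin 3 × Fin 3, A x.1 x.2 * B x.1 x.2).re ≤ 1 := by
    have h1 := re_sum_mul_le A B
    have h2 : Real.sqrt (∑ x : Fin 3 × Fin 3, Complex.normSq (A x.1 x.2)) ≤ 1 :=
      Real.sqrt_le_one.mpr (density_sum_normSq_le hA)
    have h3 : Real.sqrt (∑ x : Fin 3 × Fin 3, Complex.normSq (B x.1 x.2)) ≤ 1 :=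
      Real.sqrt_le_one.mpr (density_sum_normSq_le hB)
    nlinarith [Real.sqrt_nonneg (∑ x : Fin 3 × Fin 3, Complex.normSq (A x.1 x.2)),
      Real.sqrt_nonneg (∑ x : Fin 3 × Fin 3, Complex.normSq (B x.1 x.2))]
  linarith

lemma sep_bound (σ : Matrix (Fin 3 × Fin 3) (Fin 3 × Fin 3) ℂ) (hσ : IsSepState σ) :
    (hsInner Cmat σ).re ≤ 2/9 := by
  obtain ⟨K, p, ρ₁, ρ₂, hp0, hp1, hd1, hd2, hσeq⟩ := hσ
  rw [hσeq, hsInner_sum_right, Complex.re_sum]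
  calc ∑ k, (hsInner Cmat ((p k : ℂ) • (ρ₁ k ⊗ₖ ρ₂ k))).re
      ≤ ∑ k, p k * (2/9) := by
        apply Finset.sum_le_sum
        intro k _
        rw [hsInner_smul_right, Complex.re_ofReal_mul]
        exact mul_le_mul_of_nonneg_left (prod_bound (hd1 k) (hd2 k)) (hp0 k)
    _ = 2/9 := by rw [← Finset.sum_mul, hp1, one_mul]

end Stmt11Aux

open Stmt11Aux in
/-- Hilbert–Schmidt measure in region I: every separable state is at distance at least
(2√2/3)(α − 1/4 − β/8) from ρ_{α,β,0}; strict inequality forces entanglement. -/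
theorem stmt11 (α β : ℝ) (h : 1 / 4 + β / 8 ≤ α) :
    (∀ σ : Matrix (Fin 3 × Fin 3) (Fin 3 × Fin 3) ℂ, IsSepState σ →
      2 * Real.sqrt 2 / 3 * (α - 1 / 4 - β / 8) ≤ hsNorm (σ - rhoFam α β 0)) ∧
    (1 / 4 + β / 8 < α → ¬ IsSepState (rhoFam α β 0)) := by
  have main : ∀ σ : Matrix (Fin 3 × Fin 3) (Fin 3 × Fin 3) ℂ, IsSepState σ →
      2 * Real.sqrt 2 / 3 * (α - 1 / 4 - β / 8) ≤ hsNorm (σ - rhoFam α β 0) := by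
    intro σ hσ
    have h3 := sep_bound σ hσ
    have h1 : (hsInner Cmat (rhoFam α β 0 - σ)).re = (8*α/9 - β/9) - (hsInner Cmat σ).re := by
      rw [hsInner_sub_right, Complex.sub_re, inner_C_rho, Complex.ofReal_re]
    have h2 := re_hsInner_le Cmat (rhoFam α β 0 - σ)
    rw [hsNorm_C, hsNorm_sub_comm] at h2
    have key : 8*α/9 - β/9 - 2/9 ≤ 2 * Real.sqrt 2 / 3 * hsNorm (σ - rhoFam α β 0) := by
      rw [h1] at h2; linarith
    nlinarith [mul_le_mul_of_nonneg_left key (Real.sqrt_nonneg 2),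
      Real.sq_sqrt (show (0:ℝ) ≤ 2 by norm_num), Real.sqrt_nonneg 2,
      hsNorm_nonneg' (σ - rhoFam α β 0), h]
  refine ⟨main, fun hlt hsep => ?_⟩
  have h1 := main (rhoFam α β 0) hsep
  rw [sub_self, hsNorm_zero] at h1
  nlinarith [Real.sq_sqrt (show (0:ℝ) ≤ 2 by norm_num), Real.sqrt_nonneg 2]

end
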